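/- Let a < b be reals and n ≥ 1. For real x with na ≤ x ≤ nb, the n-dimensional Lebesgue measure of { y ∈ [a,b]^n : y_1 + ... + y_n ≤ x }, divided by (b-a)^n, equals (1/n!) · ∑_{k=0}^{⌊(x-na)/(b-a)⌋} (-1)^k · C(n,k) · ((x-na)/(b-a) - k)^n. -/

import Mathlib

open MeasureTheory Finset

noncomputable def IHset (n : ℕ) (t : ℝ) : Set (Fin n → ℝ) :=
  {y | (∀ i, y i ∈ Set.Icc (0:ℝ) 1) ∧ ∑ i, y i ≤ t}

noncomputable def IHF (n : ℕ) (t : ℝ) : ℝ :=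
  (1 / (n.factorial : ℝ)) * ∑ k ∈ range (n+1),
    (-1 : ℝ) ^ k * (n.choose k : ℝ) * (max (t - k) 0) ^ n

lemma IHset_eq (n : ℕ) (t : ℝ) : IHset n t =
    (⋂ i, (fun y : Fin n → ℝ => y i) ⁻¹' Set.Icc 0 1) ∩ ((fun y => ∑ i, y i) ⁻¹' Set.Iic t) := by
  ext y; simp [IHset, forall_and]

lemma IHset_meas (n : ℕ) (t : ℝ) : MeasurableSet (IHset n t) := by
  rw [IHset_eq]
  exact (MeasurableSet.iInter fun i =>
    measurableSet_Icc.preimage (measurable_pi_apply i)).inter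
    (measurableSet_Iic.preimage (Finset.measurable_sum _ fun i _ => measurable_pi_apply i))

lemma IHset_vol_lt_top (n : ℕ) (t : ℝ) : volume (IHset n t) < ⊤ := by
  have hsub : IHset n t ⊆ Set.univ.pi fun _ : Fin n => Set.Icc (0:ℝ) 1 :=
    fun y hy => Set.mem_univ_pi.2 fun i => hy.1 i
  refine lt_of_le_of_lt (measure_mono hsub) ?_
  rw [volume_pi_pi]
  simp [Real.volume_Icc]

lemma IHset_rec (n : ℕ) (t : ℝ) :
    volume (IHset (n+1) t) = ∫⁻ s in Set.Icc (0:ℝ) 1, volume (IHset n (t - s)) := by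
  have hmp := volume_preserving_piFinSuccAbove (fun _ : Fin (n+1) => ℝ) 0
  have h1 : volume (IHset (n+1) t) =
      (volume : Measure (ℝ × (Fin n → ℝ)))
        ((MeasurableEquiv.piFinSuccAbove (fun _ : Fin (n+1) => ℝ) 0).symm ⁻¹' IHset (n+1) t) := by
    rw [(MeasurePreserving.symm _ hmp).measure_preimage (IHset_meas _ _).nullMeasurableSet]
  have h2 : ((MeasurableEquiv.piFinSuccAbove (fun _ : Fin (n+1) => ℝ) 0).symm ⁻¹' IHset (n+1) t) =
      {p : ℝ × (Fin n → ℝ) | (p.1 ∈ Set.Icc (0:ℝ) 1 ∧ ∀ i, p.2 i ∈ Set.Icc (0:ℝ) 1)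
        ∧ p.1 + ∑ i, p.2 i ≤ t} := by
    ext ⟨s, z⟩
    simp only [Set.mem_preimage, MeasurableEquiv.piFinSuccAbove, IHset, Set.mem_setOf_eq,
      MeasurableEquiv.symm_mk, MeasurableEquiv.coe_mk, Equiv.symm_symm,
      Fin.insertNthEquiv_apply, Fin.insertNth_zero, Fin.sum_univ_succ, Fin.forall_fin_succ,
      Fin.cons_zero, Fin.cons_succ, Fin.succAbove_zero]
    tauto
  have hmeas : MeasurableSet {p : ℝ × (Fin n → ℝ) |
      (p.1 ∈ Set.Icc (0:ℝ) 1 ∧ ∀ i, p.2 i ∈ Set.Icc (0:ℝ) 1) ∧ p.1 + ∑ i, p.2 i ≤ t} := by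
    rw [← h2]
    exact (MeasurableEquiv.piFinSuccAbove (fun _ : Fin (n+1) => ℝ) 0).symm.measurable
      (IHset_meas _ _)
  rw [h1, h2, Measure.volume_eq_prod, Measure.prod_apply hmeas]
  have hslice : ∀ s : ℝ, volume (Prod.mk s ⁻¹' {p : ℝ × (Fin n → ℝ) |
      (p.1 ∈ Set.Icc (0:ℝ) 1 ∧ ∀ i, p.2 i ∈ Set.Icc (0:ℝ) 1) ∧ p.1 + ∑ i, p.2 i ≤ t}) =
      (Set.Icc (0:ℝ) 1).indicator (fun s => volume (IHset n (t - s))) s := by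
    intro s
    by_cases hs : s ∈ Set.Icc (0:ℝ) 1
    · rw [Set.indicator_of_mem hs]
      congr 1
      ext z
      simp only [Set.mem_preimage, Set.mem_setOf_eq, IHset]
      constructor
      · rintro ⟨⟨-, h2⟩, h3⟩; exact ⟨h2, by linarith⟩
      · rintro ⟨h2, h3⟩; exact ⟨⟨hs, h2⟩, by linarith⟩
    · rw [Set.indicator_of_notMem hs]
      convert measure_empty
      · ext z; simp only [Set.mem_preimage, Set.mem_setOf_eq, Set.mem_empty_iff_false,
          iff_false]
        rintro ⟨⟨h1, -⟩, -⟩; exact hs h1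
      · infer_instance
  rw [lintegral_congr hslice]; exact lintegral_indicator measurableSet_Icc _

lemma IHF_one (t : ℝ) : IHF 1 t = max t 0 - max (t - 1) 0 := by
  simp [IHF, Finset.sum_range_succ]
  ring

lemma IH_base (t : ℝ) : (volume (IHset 1 t)).toReal = IHF 1 t := by
  have hmp := volume_preserving_funUnique (Fin 1) ℝ
  have h1 : volume (IHset 1 t) = volume ({s : ℝ | s ∈ Set.Icc (0:ℝ) 1 ∧ s ≤ t}) := by
    refine ((MeasurePreserving.symm _ hmp).measure_preimage (IHset_meas _ _).nullMeasurableSet).symm.trans ?_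
    congr 1
    ext s
    simp [IHset, MeasurableEquiv.funUnique, Set.mem_preimage, Fin.sum_univ_one]
  have h2 : {s : ℝ | s ∈ Set.Icc (0:ℝ) 1 ∧ s ≤ t} = Set.Icc 0 (min 1 t) := by
    ext s; simp only [Set.mem_setOf_eq, Set.mem_Icc, le_min_iff]; tauto
  rw [h1, h2, Real.volume_Icc, ENNReal.toReal_ofReal', IHF_one]
  rcases le_or_gt t 0 with h | h <;> rcases le_or_gt 1 t with h' | h' <;>
  · simp only [min_def, max_def]
    split_ifs <;> linarith

lemma hasDerivAt_maxpow (n : ℕ) (hn : 1 ≤ n) (u : ℝ) :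
    HasDerivAt (fun v : ℝ => max v 0 ^ (n+1)) ((n+1) * max u 0 ^ n) u := by
  have hn0 : (0:ℝ) ^ n = 0 := zero_pow (by omega)
  rcases lt_trichotomy u 0 with h | h | h
  · have hev : (fun v : ℝ => max v 0 ^ (n+1)) =ᶠ[nhds u] fun _ => (0:ℝ) := by
      filter_upwards [Iio_mem_nhds h] with v hv
      simp [max_eq_right (le_of_lt (Set.mem_Iio.mp hv))]
    have h0 : HasDerivAt (fun _ : ℝ => (0:ℝ)) 0 u := hasDerivAt_const u 0
    have h1 := h0.congr_of_eventuallyEq hev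
    simpa [max_eq_right h.le, hn0] using h1
  · subst h
    rw [hasDerivAt_iff_tendsto_slope]
    have heq : ∀ v ∈ ({(0:ℝ)}ᶜ : Set ℝ),
        slope (fun v : ℝ => max v 0 ^ (n+1)) 0 v = max v 0 ^ n := by
      intro v hv
      have hv0 : v ≠ 0 := hv
      rcases lt_or_gt_of_ne hv0 with hvneg | hvpos
      · simp [slope, max_eq_right hvneg.le, hn0, zero_pow (show n+1 ≠ 0 by omega)]
      · rw [slope_def_field]
        rw [max_eq_left hvpos.le]
        simp only [max_self, zero_pow (show n+1 ≠ 0 by omega), sub_zero]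
        rw [pow_succ, mul_div_assoc, div_self hv0, mul_one]
    have htend : Filter.Tendsto (fun v : ℝ => max v 0 ^ n)
        (nhdsWithin 0 {(0:ℝ)}ᶜ) (nhds ((max (0:ℝ) 0) ^ n)) :=
      (((continuous_id.max continuous_const).pow n).tendsto 0).mono_left nhdsWithin_le_nhds
    have : (max (0:ℝ) 0) ^ n = 0 := by simpa using hn0
    rw [this] at htend
    have hval : ((n:ℝ)+1) * max (0:ℝ) 0 ^ n = 0 := by simp [hn0]
    rw [hval]
    refine htend.congr' ?_
    exact Filter.eventuallyEq_of_mem self_mem_nhdsWithin (fun v hv => (heq v hv).symm)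
  · have hev : (fun v : ℝ => max v 0 ^ (n+1)) =ᶠ[nhds u] fun v => v ^ (n+1) := by
      filter_upwards [Ioi_mem_nhds h] with v hv
      simp [max_eq_left (le_of_lt (Set.mem_Ioi.mp hv))]
    have h0 : HasDerivAt (fun v : ℝ => v ^ (n+1)) ((n+1) * u ^ n) u := by
      simpa using hasDerivAt_pow (n+1) u
    have h1 := h0.congr_of_eventuallyEq hev
    simpa [max_eq_left h.le] using h1

lemma integral_maxpow (n : ℕ) (hn : 1 ≤ n) (c : ℝ) :
    ∫ s in (0:ℝ)..1, max (c - s) 0 ^ n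
      = (max c 0 ^ (n+1) - max (c-1) 0 ^ (n+1)) / (n+1) := by
  have key : ∀ s : ℝ, HasDerivAt (fun s : ℝ => -(max (c - s) 0 ^ (n+1)) / (n+1))
      (max (c - s) 0 ^ n) s := by
    intro s
    have hinner : HasDerivAt (fun s : ℝ => c - s) (-1) s := by
      exact (hasDerivAt_id' s).const_sub c
    have houter := (hasDerivAt_maxpow n hn (c - s)).comp s hinner
    have := (houter.div_const ((n:ℝ)+1)).neg
    have hne : ((n:ℝ)+1) ≠ 0 := by positivity
    convert this using 1
    · rfl
    · rfl
    · ext v; simp only [Function.comp_apply, Pi.neg_apply]; ring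
    · rw [mul_neg_one, neg_div, neg_neg, mul_div_cancel_left₀ _ hne]
  have hcont : Continuous fun s : ℝ => max (c - s) 0 ^ n :=
    (((continuous_const.sub continuous_id).max continuous_const).pow n)
  have := intervalIntegral.integral_eq_sub_of_hasDerivAt (fun s _ => key s)
    (hcont.intervalIntegrable 0 1)
  rw [this]
  ring

lemma comb_step (n : ℕ) (M : ℕ → ℝ) :
    ∑ k ∈ range (n+1), (-1:ℝ)^k * (n.choose k) * (M k - M (k+1))
      = ∑ j ∈ range (n+2), (-1:ℝ)^j * ((n+1).choose j) * M j := by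
  have hsub : ∑ k ∈ range (n+1), (-1:ℝ)^k * (n.choose k) * (M k - M (k+1))
      = (∑ k ∈ range (n+1), (-1:ℝ)^k * (n.choose k) * M k)
        - ∑ k ∈ range (n+1), (-1:ℝ)^k * (n.choose k) * M (k+1) := by
    rw [← Finset.sum_sub_distrib]
    exact Finset.sum_congr rfl fun k _ => by ring
  rw [hsub, Finset.sum_range_succ' (fun j => (-1:ℝ)^j * ((n+1).choose j) * M j)]
  have hA : ∑ k ∈ range (n+1), (-1:ℝ)^k * (n.choose k) * M k
      = M 0 - ∑ i ∈ range (n+1), (-1:ℝ)^i * (n.choose (i+1)) * M (i+1) := by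
    rw [Finset.sum_range_succ' (fun k => (-1:ℝ)^k * (n.choose k) * M k),
      Finset.sum_range_succ (fun i => (-1:ℝ)^i * (n.choose (i+1)) * M (i+1))]
    simp [Nat.choose_succ_self, pow_succ]
    ring
  rw [hA]
  have hsplit : ∀ i, (-1:ℝ)^(i+1) * (((n+1).choose (i+1) : ℕ) : ℝ) * M (i+1)
      = -((-1:ℝ)^i * (n.choose i) * M (i+1)) - (-1:ℝ)^i * (n.choose (i+1)) * M (i+1) := by
    intro i
    rw [Nat.choose_succ_succ]
    push_cast
    ring
  rw [Finset.sum_congr rfl fun i _ => hsplit i]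
  rw [Finset.sum_sub_distrib, Finset.sum_neg_distrib]
  simp only [Nat.choose_zero_right, pow_zero, Nat.cast_one, one_mul, mul_one]
  ring

lemma IHF_cont (n : ℕ) : Continuous (IHF n) := by
  unfold IHF
  refine continuous_const.mul (continuous_finset_sum _ fun k _ => continuous_const.mul ?_)
  exact ((continuous_id.sub continuous_const).max continuous_const).pow n

lemma IH_main (n : ℕ) (hn : 1 ≤ n) (t : ℝ) : (volume (IHset n t)).toReal = IHF n t := by
  induction n, hn using Nat.le_induction generalizing t with
  | base => exact IH_base t
  | succ n hn ih =>
    have hof : ∀ u : ℝ, volume (IHset n u) = ENNReal.ofReal (IHF n u) := fun u => by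
      rw [← ih u, ENNReal.ofReal_toReal (IHset_vol_lt_top n u).ne]
    have hnonneg : ∀ u : ℝ, 0 ≤ IHF n u := fun u => (ih u) ▸ ENNReal.toReal_nonneg
    have hint : IntegrableOn (fun s => IHF n (t - s)) (Set.Icc (0:ℝ) 1) volume :=
      (((IHF_cont n).comp (continuous_const.sub continuous_id)).integrableOn_Icc)
    have h3 : ∫⁻ s in Set.Icc (0:ℝ) 1, ENNReal.ofReal (IHF n (t - s))
        = ENNReal.ofReal (∫ s in Set.Icc (0:ℝ) 1, IHF n (t - s)) := by
      rw [← ofReal_integral_eq_lintegral_ofReal hint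
        (Filter.Eventually.of_forall fun s => hnonneg _)]
    rw [IHset_rec n t]
    simp_rw [hof]
    rw [h3, ENNReal.toReal_ofReal (integral_nonneg fun s => hnonneg _)]
    rw [MeasureTheory.integral_Icc_eq_integral_Ioc,
      ← intervalIntegral.integral_of_le (zero_le_one (α := ℝ))]
    -- now compute the interval integral
    have hexp : ∀ s : ℝ, IHF n (t - s) = (1 / (n.factorial : ℝ)) *
        ∑ k ∈ range (n+1), (-1:ℝ)^k * (n.choose k) * max (t - k - s) 0 ^ n := by
      intro s
      unfold IHF
      congr 1
      exact Finset.sum_congr rfl fun k _ => by push_cast; ring_nf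
    simp_rw [hexp]
    rw [intervalIntegral.integral_const_mul]
    have hintk : ∀ k ∈ range (n+1), IntervalIntegrable
        (fun s : ℝ => (-1:ℝ)^k * (n.choose k) * max (t - k - s) 0 ^ n) volume 0 1 :=
      fun k _ => ((continuous_const.mul (((continuous_const.sub continuous_id).max
        continuous_const).pow n)).intervalIntegrable 0 1)
    rw [intervalIntegral.integral_finset_sum hintk]
    have hev : ∀ k ∈ range (n+1), ∫ s in (0:ℝ)..1, (-1:ℝ)^k * (n.choose k) * max (t - k - s) 0 ^ n
        = ((-1:ℝ)^k * (n.choose k)) * ((max (t - k) 0 ^ (n+1) - max (t - (k+1:ℕ)) 0 ^ (n+1)) / (n+1)) := by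
      intro k _
      rw [intervalIntegral.integral_const_mul, integral_maxpow n hn (t - k)]
      push_cast
      ring_nf
    rw [Finset.sum_congr rfl hev]
    have hM := comb_step n (fun k => max (t - (k:ℕ)) 0 ^ (n+1))
    unfold IHF
    rw [← hM]
    rw [Finset.mul_sum, Finset.mul_sum]
    refine Finset.sum_congr rfl fun k _ => ?_
    have : (((n+1).factorial : ℝ)) = (n.factorial : ℝ) * (n+1) := by
      rw [Nat.factorial_succ]; push_cast; ring
    rw [this]
    have h1 : (n.factorial : ℝ) ≠ 0 := Nat.cast_ne_zero.2 n.factorial_ne_zero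
    have h2 : ((n:ℝ)+1) ≠ 0 := by positivity
    field_simp

/-- CDF of the `[a,b]`-uniform-sum distribution. -/
theorem ab_uniform_sum_cdf (n : ℕ) (hn : 1 ≤ n) (a b : ℝ) (hab : a < b)
    (x : ℝ) (hx0 : n * a ≤ x) (hxn : x ≤ n * b) :
    (volume {y : Fin n → ℝ | (∀ i, y i ∈ Set.Icc a b) ∧ ∑ i, y i ≤ x}).toReal / (b - a) ^ n =
      (1 / (n.factorial : ℝ)) *
        ∑ k ∈ Finset.range (⌊(x - n * a) / (b - a)⌋₊ + 1),
          (-1 : ℝ) ^ k * (n.choose k : ℝ) * ((x - n * a) / (b - a) - (k : ℝ)) ^ n := by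
  have hba : (0:ℝ) < b - a := by linarith
  set t : ℝ := (x - n*a)/(b-a) with ht
  have ht0 : 0 ≤ t := div_nonneg (by linarith) hba.le
  have htn : t ≤ n := by rw [ht, div_le_iff₀ hba]; ring_nf; linarith
  -- set equality
  have hset : {y : Fin n → ℝ | (∀ i, y i ∈ Set.Icc a b) ∧ ∑ i, y i ≤ x}
      = (fun y : Fin n → ℝ => y + fun _ => -a) ⁻¹' (((b-a)⁻¹ • ·) ⁻¹' IHset n t) := by
    ext y
    simp only [Set.mem_preimage, Set.mem_setOf_eq, IHset, Pi.smul_apply, Pi.add_apply,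
      smul_eq_mul, Set.mem_Icc]
    have hsum : ∑ i, (b-a)⁻¹ * (y i + -a) = ((∑ i, y i) - n*a)/(b-a) := by
      rw [← Finset.mul_sum, Finset.sum_add_distrib, Finset.sum_const, Finset.card_univ,
        Fintype.card_fin, inv_mul_eq_div, nsmul_eq_mul]
      congr 1
      ring
    constructor
    · rintro ⟨h1, h2⟩
      refine ⟨fun i => ⟨?_, ?_⟩, ?_⟩
      · exact mul_nonneg (inv_nonneg.2 hba.le) (by linarith [(h1 i).1])
      · rw [inv_mul_eq_div, div_le_one hba]; linarith [(h1 i).2]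
      · rw [hsum, ht]
        gcongr <;> linarith
    · rintro ⟨h1, h2⟩
      refine ⟨fun i => ⟨?_, ?_⟩, ?_⟩
      · have h' := (h1 i).1
        rw [inv_mul_eq_div, le_div_iff₀ hba] at h'
        linarith
      · have h := (h1 i).2
        rw [inv_mul_eq_div, div_le_one hba] at h
        linarith
      · rw [hsum, ht] at h2
        rw [div_le_div_iff₀ hba hba] at h2
        nlinarith
  rw [hset, measure_preimage_add_right,
    MeasureTheory.Measure.addHaar_preimage_smul volume (inv_ne_zero hba.ne') (IHset n t),
    ENNReal.toReal_mul, ENNReal.toReal_ofReal (by positivity), IH_main n hn t]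
  have hfr : Module.finrank ℝ (Fin n → ℝ) = n := Module.finrank_fin_fun ℝ
  rw [hfr]
  have habs : |((b-a)⁻¹ ^ n)⁻¹| = (b-a)^n := by
    rw [abs_of_pos (by positivity), ← inv_pow, inv_inv]
  rw [habs, mul_comm, mul_div_assoc, div_self (by positivity : (b-a)^n ≠ 0), mul_one]
  -- convert IHF to the floor-truncated sum
  unfold IHF
  congr 1
  set m := ⌊t⌋₊ with hm
  have hmn : m ≤ n := by
    rw [hm, ← Nat.floor_natCast (R := ℝ) n]
    exact Nat.floor_le_floor htn
  have hsub : range (m+1) ⊆ range (n+1) := Finset.range_subset_range.2 (by omega)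
  have hzero : ∀ k ∈ range (n+1), k ∉ range (m+1) →
      (-1:ℝ)^k * (n.choose k) * max (t - k) 0 ^ n = 0 := by
    intro k _ hk
    have hk' : m + 1 ≤ k := by simpa [Finset.mem_range, not_lt] using hk
    have htk : t - k < 0 := by
      have h1 : t < m + 1 := Nat.lt_floor_add_one t
      have h2 : ((m:ℝ) + 1) ≤ k := by exact_mod_cast hk'
      linarith
    rw [max_eq_right htk.le, zero_pow (by omega : n ≠ 0), mul_zero]
  rw [← Finset.sum_subset hsub hzero]
  refine Finset.sum_congr rfl fun k hk => ?_
  have h1 : k ≤ m := by simpa [Finset.mem_range, Nat.lt_succ_iff] using hk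
  have hk' : (k:ℝ) ≤ t := by
    calc (k:ℝ) ≤ m := by exact_mod_cast h1
    _ ≤ t := Nat.floor_le ht0
  rw [max_eq_left (by linarith)]
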